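/- Assume 0 < p < 1. Let (x̄*, ȳ*) be the element of minimal norm of Ω and, for each t ≥ t₀ > 0, let (x_t, y_t) be the unique saddle point of L_t, and assume the curve t ↦ (x_t, y_t) is differentiable. Then ‖(ẋ_t, ẏ_t)‖ ≤ (p/t)‖(x_t, y_t)‖ ≤ (p/t)‖(x̄*, ȳ*)‖ for all t ≥ t₀. -/

import Mathlib

open Real Set Filter MeasureTheory Topology
open scoped RealInnerProductSpace

noncomputable section

abbrev Euc (n : ℕ) : Type := EuclideanSpace ℝ (Fin n)

/-- The Lagrangian `L(x,y) = f(x) + ⟨Kx, y⟩ − g(y)`. -/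
def Lag {n m : ℕ} (f : Euc n → ℝ) (g : Euc m → ℝ) (K : Euc n →L[ℝ] Euc m)
    (x : Euc n) (y : Euc m) : ℝ :=
  f x + ⟪K x, y⟫ - g y

/-- The augmented Lagrangian `L_t(x,y) = L(x,y) + (c/(2 t^p)) (‖x‖² − ‖y‖²)`. -/
def LagT {n m : ℕ} (f : Euc n → ℝ) (g : Euc m → ℝ) (K : Euc n →L[ℝ] Euc m)
    (c p : ℝ) (t : ℝ) (x : Euc n) (y : Euc m) : ℝ :=
  Lag f g K x y + (c / (2 * t ^ p)) * (‖x‖ ^ 2 - ‖y‖ ^ 2)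

/-- `∇_x L_t(x,y) = ∇f(x) + K* y + (c/t^p) x`. -/
def gradLx {n m : ℕ} (f : Euc n → ℝ) (K : Euc n →L[ℝ] Euc m)
    (c p : ℝ) (t : ℝ) (x : Euc n) (y : Euc m) : Euc n :=
  gradient f x + (ContinuousLinearMap.adjoint K) y + (c / t ^ p) • x

/-- `∇_y L_t(x,y) = −∇g(y) + K x − (c/t^p) y`. -/
def gradLy {n m : ℕ} (g : Euc m → ℝ) (K : Euc n →L[ℝ] Euc m)
    (c p : ℝ) (t : ℝ) (x : Euc n) (y : Euc m) : Euc m :=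
  -(gradient g y) + K x - (c / t ^ p) • y

/-- The extrapolation coefficient `θ(t)`. -/
def theta (α q γ s t : ℝ) : ℝ :=
  (t ^ (2*q+s) - 2*γ*q * t ^ (2*q-1) + γ * t ^ q) /
    ((α - 1) * (t ^ (q+s) - γ*q * t ^ (q-1)))

/-- `(xs, ys)` is a saddle point of `L`. -/
def IsSaddle {n m : ℕ} (L : Euc n → Euc m → ℝ) (xs : Euc n) (ys : Euc m) : Prop :=
  ∀ x : Euc n, ∀ y : Euc m, L xs y ≤ L xs ys ∧ L xs ys ≤ L x ys

/-- A global solution of the dynamical system (dyn), recorded together with its first and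
second derivatives `x', y', x'', y''` and the derivatives `Gx', Gy'` of the Hessian-driven
damping terms `t ↦ ∇_x L_t(x(t), y(t)+θ(t) y'(t))` and `t ↦ ∇_y L_t(x(t)+θ(t) x'(t), y(t))`. -/
structure IsDynSol {n m : ℕ} (f : Euc n → ℝ) (g : Euc m → ℝ) (K : Euc n →L[ℝ] Euc m)
    (c p α q γ s t₀ : ℝ) (x : ℝ → Euc n) (y : ℝ → Euc m)
    (x' x'' Gx' : ℝ → Euc n) (y' y'' Gy' : ℝ → Euc m) : Prop where
  hx' : ∀ t ≥ t₀, HasDerivAt x (x' t) t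
  hy' : ∀ t ≥ t₀, HasDerivAt y (y' t) t
  hx'' : ∀ t ≥ t₀, HasDerivAt x' (x'' t) t
  hy'' : ∀ t ≥ t₀, HasDerivAt y' (y'' t) t
  hx''c : ContinuousOn x'' (Ici t₀)
  hy''c : ContinuousOn y'' (Ici t₀)
  hGx' : ∀ t ≥ t₀, HasDerivAt
    (fun τ => gradLx f K c p τ (x τ) (y τ + theta α q γ s τ • y' τ)) (Gx' t) t
  hGy' : ∀ t ≥ t₀, HasDerivAt
    (fun τ => gradLy g K c p τ (x τ + theta α q γ s τ • x' τ) (y τ)) (Gy' t) t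
  heqx : ∀ t ≥ t₀, x'' t + (α / t ^ q) • x' t + γ • Gx' t
      + t ^ s • gradLx f K c p t (x t) (y t + theta α q γ s t • y' t) = 0
  heqy : ∀ t ≥ t₀, y'' t + (α / t ^ q) • y' t - γ • Gy' t
      - t ^ s • gradLy g K c p t (x t + theta α q γ s t • x' t) (y t) = 0

/-- The coefficient `a(t)`. -/
def aFun (α q γ s t : ℝ) : ℝ :=
  (2*q+s) * t ^ (2*q+s-1) - 2*γ*q*(2*q-1) * t ^ (2*q-2) + γ*q * t ^ (q-1)
    + (α-1) * (γ*q * t ^ (q-1) - t ^ (q+s))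

/-- The coefficient `l(t)` (depending on the constant `M`). -/
def lFun (α q c γ s p M t : ℝ) : ℝ :=
  M*(α-1)*(3*α-2)/2 * t ^ (-q) + (α-1)*c*γ/8 * t ^ (-p)
    - M*(α-1)*q/2 * t ^ (-1 : ℝ) - (α-1)*c/4 * t ^ (q+s-p)
    + (α-1)*c*γ*q/4 * t ^ (q-1-p) - (α-1)*q*c/(8*α) * t ^ (2*q+s-1-p)
    + (α-1)*q*(1-q)/2 * t ^ (q-2)

/-- `Δ(t) = ‖∇_x L_t(x(t), y(t)+θ(t)ẏ(t))‖² + ‖∇_y L_t(x(t)+θ(t)ẋ(t), y(t))‖²`. -/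
def DeltaFun {n m : ℕ} (f : Euc n → ℝ) (g : Euc m → ℝ) (K : Euc n →L[ℝ] Euc m)
    (c p α q γ s : ℝ) (x x' : ℝ → Euc n) (y y' : ℝ → Euc m) (t : ℝ) : ℝ :=
  ‖gradLx f K c p t (x t) (y t + theta α q γ s t • y' t)‖ ^ 2
    + ‖gradLy g K c p t (x t + theta α q γ s t • x' t) (y t)‖ ^ 2

/-- The energy function `Ê(t)` of Lemma 4.1, built from the saddle points `(x_t, y_t)` of the
augmented Lagrangians. -/
def Ehat {n m : ℕ} (f : Euc n → ℝ) (g : Euc m → ℝ) (K : Euc n →L[ℝ] Euc m)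
    (c p α q γ s : ℝ) (xt x x' : ℝ → Euc n) (yt y y' : ℝ → Euc m) (t : ℝ) : ℝ :=
  (t ^ (2*q+s) - 2*γ*q * t ^ (2*q-1) + γ * t ^ q) *
      (LagT f g K c p t (x t) (yt t) - LagT f g K c p t (xt t) (y t))
    + (1/2) * ‖(α-1) • (x t - xt t)
        + t ^ q • (x' t + γ • gradLx f K c p t (x t) (y t + theta α q γ s t • y' t))‖ ^ 2
    + (α-1)/2 * (1 - q * t ^ (q-1)) * ‖x t - xt t‖ ^ 2
    + (1/2) * ‖(α-1) • (y t - yt t)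
        + t ^ q • (y' t - γ • gradLy g K c p t (x t + theta α q γ s t • x' t) (y t))‖ ^ 2
    + (α-1)/2 * (1 - q * t ^ (q-1)) * ‖y t - yt t‖ ^ 2

/-- The energy function `E(t)` of Theorem 3.1, built from a fixed saddle point `(xs, ys)` of `L`. -/
def Efun {n m : ℕ} (f : Euc n → ℝ) (g : Euc m → ℝ) (K : Euc n →L[ℝ] Euc m)
    (c p α q γ s : ℝ) (xs : Euc n) (ys : Euc m)
    (x x' : ℝ → Euc n) (y y' : ℝ → Euc m) (t : ℝ) : ℝ :=
  (t ^ (2*q+s) - 2*γ*q * t ^ (2*q-1) + γ * t ^ q) *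
      (Lag f g K (x t) ys - Lag f g K xs (y t) + c / (2 * t ^ p) * (‖x t‖ ^ 2 + ‖y t‖ ^ 2))
    + (1/2) * ‖(α-1) • (x t - xs)
        + t ^ q • (x' t + γ • gradLx f K c p t (x t) (y t + theta α q γ s t • y' t))‖ ^ 2
    + (α-1)/2 * (1 - q * t ^ (q-1)) * ‖x t - xs‖ ^ 2
    + (1/2) * ‖(α-1) • (y t - ys)
        + t ^ q • (y' t - γ • gradLy g K c p t (x t + theta α q γ s t • x' t) (y t))‖ ^ 2
    + (α-1)/2 * (1 - q * t ^ (q-1)) * ‖y t - ys‖ ^ 2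



section Helpers

variable {E : Type*} [NormedAddCommGroup E] [InnerProductSpace ℝ E] [CompleteSpace E]

lemma grad_mono {h : E → ℝ} (hc : ConvexOn ℝ univ h) (hd : Differentiable ℝ h) (a b : E) :
    0 ≤ ⟪gradient h b - gradient h a, b - a⟫ := by
  have hder : ∀ τ : ℝ, HasDerivAt (fun σ : ℝ => h (a + σ • (b - a)))
      ⟪gradient h (a + τ • (b - a)), b - a⟫ τ := by
    intro τ
    have hcurve : HasDerivAt (fun σ : ℝ => a + σ • (b - a)) (b - a) τ := by
      simpa using ((hasDerivAt_id τ).smul_const (b - a)).const_add a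
    have hg := (hd (a + τ • (b - a))).hasGradientAt
    rw [hasGradientAt_iff_hasFDerivAt] at hg
    have := hg.comp_hasDerivAt τ hcurve
    exact this.congr_deriv (by simp [InnerProductSpace.toDual_apply_apply, inner_sub_right])
  have hφc : ConvexOn ℝ univ (fun σ : ℝ => h (a + σ • (b - a))) := by
    have := hc.comp_affineMap (AffineMap.lineMap a b : ℝ →ᵃ[ℝ] E)
    simp only [Set.preimage_univ] at this
    convert this using 2 with σ
    rotate_left 4
    simp only [Function.comp_apply, AffineMap.lineMap_apply_module']
    congr 1
    abel
    all_goals rfl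
  have hmono := hφc.monotoneOn_deriv (fun x _ => (hder x).differentiableAt)
  have h01 := hmono (mem_univ (0:ℝ)) (mem_univ (1:ℝ)) zero_le_one
  rw [(hder 0).deriv, (hder 1).deriv] at h01
  simp only [zero_smul, add_zero, one_smul] at h01
  rw [inner_sub_left]
  have hab : a + (b - a) = b := by abel
  rw [hab] at h01
  linarith

lemma sec_order (u x : ℝ → E) (u' x' : E) (t : ℝ) (hu : HasDerivAt u u' t)
    (hx : HasDerivAt x x' t) (hm : ∀ s, 0 ≤ ⟪u s - u t, x s - x t⟫) : 0 ≤ ⟪u', x'⟫ := by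
  have h1 : Tendsto (slope u t) (𝓝[≠] t) (𝓝 u') := hasDerivAt_iff_tendsto_slope.mp hu
  have h2 : Tendsto (slope x t) (𝓝[≠] t) (𝓝 x') := hasDerivAt_iff_tendsto_slope.mp hx
  have h3 : Tendsto (fun s => ⟪slope u t s, slope x t s⟫) (𝓝[≠] t) (𝓝 ⟪u', x'⟫) :=
    h1.inner h2
  refine ge_of_tendsto h3 ?_
  filter_upwards with s
  simp only [slope_def_module, real_inner_smul_left, real_inner_smul_right]
  nlinarith [hm s, sq_nonneg ((s - t)⁻¹)]

lemma stationary {h : E → ℝ} (hd : Differentiable ℝ h) (b z : E) (μ : ℝ)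
    (hmin : ∀ w, h z + ⟪b, z⟫ + μ/2 * ‖z‖^2 ≤ h w + ⟪b, w⟫ + μ/2 * ‖w‖^2) :
    gradient h z + b + μ • z = 0 := by
  have hgz := (hd z).hasGradientAt
  rw [hasGradientAt_iff_hasFDerivAt] at hgz
  have h2 : HasFDerivAt (fun w : E => ⟪b, w⟫)
      (InnerProductSpace.toDual ℝ E b : E →L[ℝ] ℝ) z :=
    ((InnerProductSpace.toDual ℝ E b) : E →L[ℝ] ℝ).hasFDerivAt (x := z)
  have hsq0 := (hasFDerivAt_id (𝕜 := ℝ) z).inner ℝ (hasFDerivAt_id z)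
  have hsq : HasFDerivAt (fun w : E => ‖w‖^2)
      ((fderivInnerCLM ℝ (z, z)).comp ((ContinuousLinearMap.id ℝ E).prod
        (ContinuousLinearMap.id ℝ E))) z := by
    refine hsq0.congr_of_eventuallyEq ?_
    filter_upwards with w
    simp [real_inner_self_eq_norm_sq]
  have hder := (hgz.add h2).add (hsq.const_mul (μ/2))
  have hloc : IsLocalMin (fun w => h w + ⟪b, w⟫ + μ/2 * ‖w‖^2) z :=
    Filter.Eventually.of_forall hmin
  have hD0 := hloc.hasFDerivAt_eq_zero hder
  have key : ∀ v : E, ⟪gradient h z + b + μ • z, v⟫ = 0 := by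
    intro v
    have := congrFun (congrArg (fun (T : E →L[ℝ] ℝ) => (T : E → ℝ)) hD0) v
    simp only [ContinuousLinearMap.add_apply, ContinuousLinearMap.coe_smul',
      ContinuousLinearMap.coe_comp', ContinuousLinearMap.zero_apply, Pi.smul_apply,
      Function.comp_apply, ContinuousLinearMap.prod_apply, ContinuousLinearMap.coe_id', id_eq,
      fderivInnerCLM_apply, InnerProductSpace.toDual_apply_apply, smul_eq_mul] at this
    rw [inner_add_left, inner_add_left, real_inner_smul_left]
    rw [real_inner_comm z v] at this
    linarith [this]
  have := key (gradient h z + b + μ • z)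
  rwa [inner_self_eq_zero] at this

lemma grad_diff {h : E → ℝ} (hh : ContDiff ℝ 2 h) : Differentiable ℝ (gradient h) := by
  have h1 : ContDiff ℝ 1 (fderiv ℝ h) := by
    have := hh.fderiv_right (m := 1) (by norm_num)
    exact this
  have h2 : Differentiable ℝ (fderiv ℝ h) := h1.differentiable one_ne_zero
  have h3 : gradient h = fun x =>
      (InnerProductSpace.toDual ℝ E).symm (fderiv ℝ h x) := rfl
  rw [h3]
  set T := (InnerProductSpace.toDual ℝ E).symm.toContinuousLinearEquiv.toContinuousLinearMap
  have h4 : Differentiable ℝ (fun φ : (E →L[ℝ] ℝ) => T φ) := T.differentiable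
  exact h4.comp h2

lemma deriv_zero_of_eqOn_Ici {Φ : ℝ → E} {D : E} {t₀ t : ℝ} (ht : t₀ ≤ t)
    (hΦ : HasDerivAt Φ D t) (h0 : ∀ s ∈ Ici t₀, Φ s = 0) : D = 0 := by
  have h1 : HasDerivWithinAt Φ D (Ici t₀) t := hΦ.hasDerivWithinAt
  have h2 : HasDerivWithinAt Φ 0 (Ici t₀) t := by
    refine (hasDerivWithinAt_const t (Ici t₀) (0 : E)).congr (fun s hs => h0 s hs) (h0 t ht)
  have hu := uniqueDiffOn_Ici t₀ t ht
  rw [← h1.derivWithin hu, ← h2.derivWithin hu]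

lemma mu_deriv (c p t : ℝ) (ht : 0 < t) :
    HasDerivAt (fun s : ℝ => c / s ^ p) (-(p / t) * (c / t ^ p)) t := by
  have h1 : HasDerivAt (fun s : ℝ => s ^ p) (p * t ^ (p - 1)) t :=
    Real.hasDerivAt_rpow_const (Or.inl (ne_of_gt ht))
  have htp : (0:ℝ) < t ^ p := Real.rpow_pos_of_pos ht p
  have := (hasDerivAt_const t c).div h1 (ne_of_gt htp)
  refine this.congr_deriv ?_
  rw [Real.rpow_sub ht, Real.rpow_one]
  field_simp
  ring

end Helpers

set_option maxHeartbeats 2000000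
section MoreHelpers

variable {E : Type*} [NormedAddCommGroup E] [InnerProductSpace ℝ E] [CompleteSpace E]

lemma sum_prod_le_sqrt (a b c d : ℝ) (ha : 0 ≤ a) (hb : 0 ≤ b) (hc : 0 ≤ c) (hd : 0 ≤ d) :
    a * c + b * d ≤ Real.sqrt (a^2 + b^2) * Real.sqrt (c^2 + d^2) := by
  rw [← Real.sqrt_mul (by positivity)]
  rw [Real.le_sqrt (by positivity) (by positivity)]
  nlinarith [sq_nonneg (a*d - b*c)]

end MoreHelpers

theorem stmt7
    {n m : ℕ}
    (f : Euc n → ℝ) (g : Euc m → ℝ) (K : Euc n →L[ℝ] Euc m)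
    (hf : ContDiff ℝ 2 f) (hg : ContDiff ℝ 2 g)
    (hfc : ConvexOn ℝ Set.univ f) (hgc : ConvexOn ℝ Set.univ g)
    (c p t₀ : ℝ) (hc : 0 < c) (hp0 : 0 < p) (hp1 : p < 1) (ht₀ : 0 < t₀)
    (xt : ℝ → Euc n) (yt : ℝ → Euc m)
    (hsad : ∀ t ≥ t₀, IsSaddle (LagT f g K c p t) (xt t) (yt t))
    (xt' : ℝ → Euc n) (yt' : ℝ → Euc m)
    (hxt' : ∀ t ≥ t₀, HasDerivAt xt (xt' t) t)
    (hyt' : ∀ t ≥ t₀, HasDerivAt yt (yt' t) t)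
    (xb : Euc n) (yb : Euc m)
    (hb : IsSaddle (Lag f g K) xb yb)
    (hmin : ∀ xs : Euc n, ∀ ys : Euc m, IsSaddle (Lag f g K) xs ys →
      Real.sqrt (‖xb‖ ^ 2 + ‖yb‖ ^ 2) ≤ Real.sqrt (‖xs‖ ^ 2 + ‖ys‖ ^ 2)) :
    ∀ t ≥ t₀,
      Real.sqrt (‖xt' t‖ ^ 2 + ‖yt' t‖ ^ 2) ≤ p / t * Real.sqrt (‖xt t‖ ^ 2 + ‖yt t‖ ^ 2) ∧
      p / t * Real.sqrt (‖xt t‖ ^ 2 + ‖yt t‖ ^ 2) ≤ p / t * Real.sqrt (‖xb‖ ^ 2 + ‖yb‖ ^ 2) := by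
  have hfd : Differentiable ℝ f := hf.differentiable two_ne_zero
  have hgd : Differentiable ℝ g := hg.differentiable two_ne_zero
  set K' := ContinuousLinearMap.adjoint K with hK'
  have hadj : ∀ (y : Euc m) (v : Euc n), (⟪K' y, v⟫ : ℝ) = ⟪K v, y⟫ := by
    intro y v
    rw [hK', ContinuousLinearMap.adjoint_inner_left]
    exact real_inner_comm _ _
  -- stationarity equations for the Tikhonov curve
  have Eq1 : ∀ s ≥ t₀, gradient f (xt s) + K' (yt s) + (c / s ^ p) • xt s = 0 := by
    intro s hs
    refine stationary hfd (K' (yt s)) (xt s) (c / s ^ p) ?_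
    intro w
    have H := (hsad s hs w (yt s)).2
    simp only [LagT, Lag] at H
    rw [hadj, hadj]
    have hcoef : c / (2 * s ^ p) = (c / s ^ p) / 2 := by ring
    rw [hcoef] at H
    ring_nf at H ⊢
    linarith
  have Eq2 : ∀ s ≥ t₀, gradient g (yt s) + (-(K (xt s))) + (c / s ^ p) • yt s = 0 := by
    intro s hs
    refine stationary hgd (-(K (xt s))) (yt s) (c / s ^ p) ?_
    intro w
    have H := (hsad s hs (xt s) w).1
    simp only [LagT, Lag] at H
    simp only [inner_neg_left]
    have hcoef : c / (2 * s ^ p) = (c / s ^ p) / 2 := by ring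
    rw [hcoef] at H
    ring_nf at H ⊢
    linarith
  -- stationarity for the minimal-norm saddle point of L
  have EqB1 : gradient f xb + K' yb = 0 := by
    have h0 := stationary hfd (K' yb) xb 0 ?_
    · simpa using h0
    · intro w
      have H := (hb w yb).2
      simp only [Lag] at H
      rw [hadj, hadj]
      ring_nf at H ⊢
      linarith
  have EqB2 : gradient g yb + (-(K xb)) = 0 := by
    have h0 := stationary hgd (-(K xb)) yb 0 ?_
    · simpa using h0
    · intro w
      have H := (hb xb w).1
      simp only [Lag] at H
      simp only [inner_neg_left]
      ring_nf at H ⊢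
      linarith
  intro t ht
  have ht0 : 0 < t := lt_of_lt_of_le ht₀ ht
  have htp : (0:ℝ) < t ^ p := Real.rpow_pos_of_pos ht0 p
  set μ : ℝ := c / t ^ p with hμdef
  have hμ : 0 < μ := div_pos hc htp
  have hpt : 0 < p / t := div_pos hp0 ht0
  -- inner-product versions of the equations at time t
  have ip1 : ∀ v : Euc n, (⟪gradient f (xt t), v⟫:ℝ) = -⟪K' (yt t), v⟫ - μ * ⟪xt t, v⟫ := by
    intro v
    have h := congrArg (fun z => (⟪z, v⟫:ℝ)) (Eq1 t ht)
    simp only [inner_add_left, real_inner_smul_left, inner_zero_left] at h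
    linarith
  have ip2 : ∀ v : Euc m, (⟪gradient g (yt t), v⟫:ℝ) = ⟪K (xt t), v⟫ - μ * ⟪yt t, v⟫ := by
    intro v
    have h := congrArg (fun z => (⟪z, v⟫:ℝ)) (Eq2 t ht)
    simp only [inner_add_left, real_inner_smul_left, inner_zero_left, inner_neg_left] at h
    linarith
  have ipb1 : ∀ v : Euc n, (⟪gradient f xb, v⟫:ℝ) = -⟪K' yb, v⟫ := by
    intro v
    have h := congrArg (fun z => (⟪z, v⟫:ℝ)) EqB1
    simp only [inner_add_left, inner_zero_left] at h
    linarith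
  have ipb2 : ∀ v : Euc m, (⟪gradient g yb, v⟫:ℝ) = ⟪K xb, v⟫ := by
    intro v
    have h := congrArg (fun z => (⟪z, v⟫:ℝ)) EqB2
    simp only [inner_add_left, inner_zero_left, inner_neg_left] at h
    linarith
  -- PART 1 : ‖(x_t,y_t)‖ ≤ ‖(x̄*,ȳ*)‖
  set v : Euc n := xt t - xb with hv
  set w : Euc m := yt t - yb with hw
  have M1 : (0:ℝ) ≤ ⟪gradient f (xt t), v⟫ - ⟪gradient f xb, v⟫ := by
    rw [← inner_sub_left]; exact grad_mono hfc hfd xb (xt t)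
  have M2 : (0:ℝ) ≤ ⟪gradient g (yt t), w⟫ - ⟪gradient g yb, w⟫ := by
    rw [← inner_sub_left]; exact grad_mono hgc hgd yb (yt t)
  rw [ip1 v, ipb1 v] at M1
  rw [ip2 w, ipb2 w] at M2
  have cross : (⟪K' (yt t), v⟫:ℝ) - ⟪K' yb, v⟫ = ⟪K (xt t), w⟫ - ⟪K xb, w⟫ := by
    rw [hadj, hadj, ← inner_sub_right, ← inner_sub_left, ← map_sub, ← hw,
      real_inner_comm]
  have hSle : (⟪xt t, v⟫:ℝ) + ⟪yt t, w⟫ ≤ 0 := by nlinarith [M1, M2, cross, hμ]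
  have key1 : ‖xt t‖^2 + ‖yt t‖^2 ≤ ⟪xt t, xb⟫ + ⟪yt t, yb⟫ := by
    rw [hv, hw, inner_sub_right, inner_sub_right] at hSle
    rw [← real_inner_self_eq_norm_sq, ← real_inner_self_eq_norm_sq]
    linarith
  set B := Real.sqrt (‖xt t‖^2 + ‖yt t‖^2) with hB
  set C := Real.sqrt (‖xb‖^2 + ‖yb‖^2) with hC
  have hBnn : 0 ≤ B := Real.sqrt_nonneg _
  have hCnn : 0 ≤ C := Real.sqrt_nonneg _
  have hB2 : B^2 = ‖xt t‖^2 + ‖yt t‖^2 := Real.sq_sqrt (by positivity)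
  have hprod : ‖xt t‖ * ‖xb‖ + ‖yt t‖ * ‖yb‖ ≤ B * C :=
    sum_prod_le_sqrt _ _ _ _ (norm_nonneg _) (norm_nonneg _) (norm_nonneg _) (norm_nonneg _)
  have hBC : B ≤ C := by
    have hsq : B^2 ≤ B * C := by
      have c1 := real_inner_le_norm (xt t) xb
      have c2 := real_inner_le_norm (yt t) yb
      linarith [key1, hprod, hB2]
    rcases eq_or_lt_of_le hBnn with h | h
    · linarith [hCnn, h]
    · nlinarith
  refine ⟨?_, mul_le_mul_of_nonneg_left hBC (le_of_lt hpt)⟩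
  -- PART 2 : velocity bound
  have hxtd := hxt' t ht
  have hytd := hyt' t ht
  set u : ℝ → Euc n := fun s => gradient f (xt s) with hu_def
  set vg : ℝ → Euc m := fun s => gradient g (yt s) with hvg_def
  have hud : DifferentiableAt ℝ u t :=
    ((grad_diff hf) (xt t)).comp t hxtd.differentiableAt
  have hvd : DifferentiableAt ℝ vg t :=
    ((grad_diff hg) (yt t)).comp t hytd.differentiableAt
  have hu : HasDerivAt u (deriv u t) t := hud.hasDerivAt
  have hv' : HasDerivAt vg (deriv vg t) t := hvd.hasDerivAt
  set u' := deriv u t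
  set v' := deriv vg t
  -- differentiate the optimality system
  have hΦ : HasDerivAt (fun s => u s + K' (yt s) + (c / s ^ p) • xt s)
      (u' + K' (yt' t) + ((c / t ^ p) • xt' t + (-(p/t) * (c / t ^ p)) • xt t)) t := by
    exact (hu.add ((K'.hasFDerivAt).comp_hasDerivAt t hytd)).add
      ((mu_deriv c p t ht0).smul hxtd)
  have hΨ : HasDerivAt (fun s => vg s + (-(K (xt s))) + (c / s ^ p) • yt s)
      (v' + (-(K (xt' t))) + ((c / t ^ p) • yt' t + (-(p/t) * (c / t ^ p)) • yt t)) t := by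
    exact (hv'.add (((K.hasFDerivAt).comp_hasDerivAt t hxtd).neg)).add
      ((mu_deriv c p t ht0).smul hytd)
  have hD1 : u' + K' (yt' t) + ((c / t ^ p) • xt' t + (-(p/t) * (c / t ^ p)) • xt t) = 0 :=
    deriv_zero_of_eqOn_Ici ht hΦ (fun s hs => Eq1 s hs)
  have hD2 : v' + (-(K (xt' t))) + ((c / t ^ p) • yt' t + (-(p/t) * (c / t ^ p)) • yt t) = 0 :=
    deriv_zero_of_eqOn_Ici ht hΨ (fun s hs => Eq2 s hs)
  -- second-order monotonicity
  have hA : (0:ℝ) ≤ ⟪u', xt' t⟫ := by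
    refine sec_order u xt u' (xt' t) t hu hxtd ?_
    intro s
    exact grad_mono hfc hfd (xt t) (xt s)
  have hAB : (0:ℝ) ≤ ⟪v', yt' t⟫ := by
    refine sec_order vg yt v' (yt' t) t hv' hytd ?_
    intro s
    exact grad_mono hgc hgd (yt t) (yt s)
  -- scalar consequences
  have e1 := congrArg (fun z => (⟪z, xt' t⟫:ℝ)) hD1
  have e2 := congrArg (fun z => (⟪z, yt' t⟫:ℝ)) hD2
  simp only [inner_add_left, real_inner_smul_left, inner_zero_left, inner_neg_left,
    real_inner_self_eq_norm_sq] at e1 e2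
  have crossv : (⟪K' (yt' t), xt' t⟫:ℝ) = ⟪K (xt' t), yt' t⟫ := hadj _ _
  set S : ℝ := ⟪xt t, xt' t⟫ + ⟪yt t, yt' t⟫ with hS
  have hmain : μ * (‖xt' t‖^2 + ‖yt' t‖^2) ≤ μ * ((p/t) * S) := by
    rw [hμdef]
    nlinarith [hA, hAB, e1, e2, crossv]
  have hN2 : ‖xt' t‖^2 + ‖yt' t‖^2 ≤ (p/t) * S := (mul_le_mul_iff_of_pos_left hμ).mp hmain
  set N := Real.sqrt (‖xt' t‖^2 + ‖yt' t‖^2) with hN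
  have hNnn : 0 ≤ N := Real.sqrt_nonneg _
  have hNsq : N^2 = ‖xt' t‖^2 + ‖yt' t‖^2 := Real.sq_sqrt (by positivity)
  have hSB : S ≤ B * N := by
    have c1 := real_inner_le_norm (xt t) (xt' t)
    have c2 := real_inner_le_norm (yt t) (yt' t)
    have := sum_prod_le_sqrt ‖xt t‖ ‖yt t‖ ‖xt' t‖ ‖yt' t‖
      (norm_nonneg _) (norm_nonneg _) (norm_nonneg _) (norm_nonneg _)
    rw [hS]
    calc (⟪xt t, xt' t⟫:ℝ) + ⟪yt t, yt' t⟫ ≤ ‖xt t‖ * ‖xt' t‖ + ‖yt t‖ * ‖yt' t‖ := by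
          linarith
      _ ≤ B * N := this
  have hfin : N^2 ≤ (p/t) * (B * N) := by
    calc N^2 = ‖xt' t‖^2 + ‖yt' t‖^2 := hNsq
      _ ≤ (p/t) * S := hN2
      _ ≤ (p/t) * (B * N) := by
          exact mul_le_mul_of_nonneg_left hSB (le_of_lt hpt)
  rcases eq_or_lt_of_le hNnn with h | h
  · rw [← h]
    positivity
  · have : N * N ≤ N * ((p/t) * B) := by nlinarith
    have := (mul_le_mul_iff_of_pos_left h).mp this
    linarith
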